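/- Let G be a locally compact Hausdorff groupoid with totally disconnected unit space such that s is a local homeomorphism. Then the set A(G) of locally constant compactly supported complex functions is dense in C_c(G) with respect to the I-norm (and hence with respect to the uniform norm). -/

import Mathlib

open scoped BigOperators

structure EtaleGroupoid (G : Type*) [TopologicalSpace G] where
  r : G → G
  s : G → G
  mul : G → G → G
  inv : G → G
  mul_assoc' : ∀ a b c, s a = r b → s b = r c → mul (mul a b) c = mul a (mul b c)
  r_mul : ∀ a b, s a = r b → r (mul a b) = r a
  s_mul : ∀ a b, s a = r b → s (mul a b) = s b
  unit_mul : ∀ a, mul (r a) a = a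
  mul_unit : ∀ a, mul a (s a) = a
  inv_inv : ∀ a, inv (inv a) = a
  r_inv : ∀ a, r (inv a) = s a
  s_inv : ∀ a, s (inv a) = r a
  mul_inv : ∀ a, mul a (inv a) = r a
  inv_mul : ∀ a, mul (inv a) a = s a
  continuous_r : Continuous r
  continuous_s : Continuous s
  continuous_inv : Continuous inv
  continuous_mul : ContinuousOn (fun p : G × G => mul p.1 p.2) {p : G × G | s p.1 = r p.2}

namespace EtaleGroupoid

variable {G : Type*} [TopologicalSpace G] (g : EtaleGroupoid G)

/-- The unit space `G⁰`. -/
def unitSpace : Set G := Set.range g.r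

/-- A bisection: a subset on which both `r` and `s` are injective. -/
def IsBisection (U : Set G) : Prop := Set.InjOn g.r U ∧ Set.InjOn g.s U

/-- The set-product `UV` of two subsets of `G`. -/
def setMul (U V : Set G) : Set G :=
  {x | ∃ a ∈ U, ∃ b ∈ V, g.s a = g.r b ∧ x = g.mul a b}

/-- The source map is a local homeomorphism (onto its open image). -/
def SourceEtale : Prop :=
  ∀ a : G, ∃ U : Set G, IsOpen U ∧ a ∈ U ∧ Set.InjOn g.s U ∧
    ∀ V : Set G, V ⊆ U → IsOpen V → IsOpen (g.s '' V)

/-- The unit space is totally disconnected: it has a basis of compact open sets. -/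
def UnitBasis : Prop :=
  ∀ u ∈ g.unitSpace, ∀ V : Set G, IsOpen V → u ∈ V →
    ∃ W : Set G, IsCompact W ∧ IsOpen W ∧ u ∈ W ∧ W ⊆ V ∧ W ⊆ g.unitSpace

/-- Convolution of complex functions on `G`. -/
noncomputable def conv (f h : G → ℂ) : G → ℂ :=
  fun γ => ∑ᶠ α ∈ {α : G | g.r α = g.r γ}, f α * h (g.mul (g.inv α) γ)

/-- The involution `f*(γ) = conj (f (γ⁻¹))`. -/
noncomputable def star' (f : G → ℂ) : G → ℂ := fun γ => (starRingEnd ℂ) (f (g.inv γ))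

/-- Indicator function of a set. -/
noncomputable def ind (U : Set G) : G → ℂ := Set.indicator U 1

/-- `c : G → Γ` is a cocycle. -/
def IsCocycle {Γ : Type*} [Group Γ] (c : G → Γ) : Prop :=
  ∀ a b, g.s a = g.r b → c (g.mul a b) = c a * c b

/-- The `n`-graded compact open bisections. -/
def BcoGr {Γ : Type*} (c : G → Γ) (n : Γ) : Set (Set G) :=
  {U | IsCompact U ∧ IsOpen U ∧ g.IsBisection U ∧ ∀ x ∈ U, c x = n}

/-- All graded compact open bisections. -/
def Bco {Γ : Type*} (c : G → Γ) : Set (Set G) := ⋃ n, g.BcoGr c n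

/-- `A(G)`: the locally constant, compactly supported complex functions, as a
submodule of `G → ℂ`. -/
noncomputable def AG : Submodule ℂ (G → ℂ) where
  carrier := {f | IsLocallyConstant f ∧ HasCompactSupport f}
  add_mem' := by
    rintro f h ⟨hf1, hf2⟩ ⟨hh1, hh2⟩
    exact ⟨hf1.comp₂ hh1 (· + ·), hf2.add hh2⟩
  zero_mem' := ⟨IsLocallyConstant.const 0, by
    simp [HasCompactSupport, tsupport]⟩
  smul_mem' := by
    rintro a f ⟨hf1, hf2⟩
    constructor
    · have h := hf1.comp (fun z : ℂ => a * z)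
      have : a • f = (fun z : ℂ => a * z) ∘ f := by
        funext x; simp [Function.comp, smul_eq_mul]
      rwa [this]
    · exact hf2.mono fun x hx => by
        have h : a * f x ≠ 0 := hx
        exact fun h0 => h (by simp [h0])

/-- The I-norm on `C_c(G)`. -/
noncomputable def Inorm (f : G → ℂ) : ℝ :=
  max (⨆ u ∈ g.unitSpace, ∑ᶠ α ∈ {α : G | g.r α = u}, ‖f α‖)
      (⨆ u ∈ g.unitSpace, ∑ᶠ α ∈ {α : G | g.s α = u}, ‖f α‖)

/-- A representation of the graded compact open bisections in a complex algebra. -/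
structure IsRep {Γ : Type*} {B : Type*} [Ring B] [Algebra ℂ B]
    (c : G → Γ) (t : Set G → B) : Prop where
  map_empty : t ∅ = 0
  map_mul : ∀ U V, U ∈ g.Bco c → V ∈ g.Bco c → t U * t V = t (g.setMul U V)
  map_union : ∀ n U V, U ∈ g.BcoGr c n → V ∈ g.BcoGr c n → Disjoint U V →
    g.IsBisection (U ∪ V) → t U + t V = t (U ∪ V)

end EtaleGroupoid



section Aux

open Set

variable {G : Type*} [TopologicalSpace G] [T2Space G]

/-- Every point has a compact open neighborhood inside any open neighborhood,
on which both `s` and `r` are injective. -/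
lemma exists_compactOpen_nbhd (g : EtaleGroupoid G) (hs : g.SourceEtale)
    (hu : g.UnitBasis) (a : G) (O : Set G) (hO : IsOpen O) (haO : a ∈ O) :
    ∃ V : Set G, IsCompact V ∧ IsOpen V ∧ a ∈ V ∧ V ⊆ O ∧
      Set.InjOn g.s V ∧ Set.InjOn g.r V := by
  obtain ⟨U, hUopen, haU, hUinj, hUimg⟩ := hs a
  obtain ⟨U', hU'open, haU', hU'inj, _⟩ := hs (g.inv a)
  set U₂ : Set G := (U ∩ g.inv ⁻¹' U') ∩ O with hU₂def
  have hU₂open : IsOpen U₂ :=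
    ((hUopen.inter (hU'open.preimage g.continuous_inv)).inter hO)
  have haU₂ : a ∈ U₂ := ⟨⟨haU, haU'⟩, haO⟩
  have hU₂U : U₂ ⊆ U := fun x hx => hx.1.1
  have hU₂inj : Set.InjOn g.s U₂ := hUinj.mono hU₂U
  have hU₂rinj : Set.InjOn g.r U₂ := by
    intro x hx y hy hxy
    have hx' : g.inv x ∈ U' := hx.1.2
    have hy' : g.inv y ∈ U' := hy.1.2
    have : g.s (g.inv x) = g.s (g.inv y) := by rw [g.s_inv, g.s_inv, hxy]
    have := hU'inj hx' hy' this
    have := congrArg g.inv this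
    rwa [g.inv_inv, g.inv_inv] at this
  have himg : IsOpen (g.s '' U₂) := hUimg U₂ hU₂U hU₂open
  have hsa_unit : g.s a ∈ g.unitSpace := ⟨g.inv a, g.r_inv a⟩
  obtain ⟨W, hWcomp, hWopen, hsaW, hWsub, _⟩ :=
    hu (g.s a) hsa_unit (g.s '' U₂) himg ⟨a, haU₂, rfl⟩
  -- the local inverse of s on U₂
  classical
  set σ : G → G := fun w => if h : ∃ x, x ∈ U₂ ∧ g.s x = w then h.choose else a with hσdef
  have hσ_spec : ∀ w : G, (∃ x, x ∈ U₂ ∧ g.s x = w) → σ w ∈ U₂ ∧ g.s (σ w) = w := by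
    intro w hw
    simp only [hσdef, dif_pos hw]
    exact hw.choose_spec
  have hσ_inv : ∀ x ∈ U₂, σ (g.s x) = x := by
    intro x hx
    have hw : ∃ y, y ∈ U₂ ∧ g.s y = g.s x := ⟨x, hx, rfl⟩
    obtain ⟨h1, h2⟩ := hσ_spec _ hw
    exact hU₂inj h1 hx h2
  set V : Set G := U₂ ∩ g.s ⁻¹' W with hVdef
  have hVopen : IsOpen V := hU₂open.inter (hWopen.preimage g.continuous_s)
  have haV : a ∈ V := ⟨haU₂, hsaW⟩
  have hVO : V ⊆ O := fun x hx => hx.1.2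
  have hVimg : V = σ '' W := by
    apply Set.Subset.antisymm
    · intro x hx
      exact ⟨g.s x, hx.2, hσ_inv x hx.1⟩
    · rintro _ ⟨w, hw, rfl⟩
      obtain ⟨h1, h2⟩ := hσ_spec w (by
        obtain ⟨x, hx, hxw⟩ := hWsub hw
        exact ⟨x, hx, hxw⟩)
      exact ⟨h1, by rw [Set.mem_preimage, h2]; exact hw⟩
  have hσcont : ContinuousOn σ W := by
    rw [continuousOn_iff]
    intro w hw t ht hσwt
    obtain ⟨x₀, hx₀, hx₀w⟩ := hWsub hw
    obtain ⟨h1, h2⟩ := hσ_spec w ⟨x₀, hx₀, hx₀w⟩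
    refine ⟨g.s '' (U₂ ∩ t), hUimg _ (fun x hx => hU₂U hx.1) (hU₂open.inter ht), ?_, ?_⟩
    · exact ⟨σ w, ⟨h1, hσwt⟩, h2⟩
    · rintro w' ⟨⟨y, ⟨hyU, hyt⟩, rfl⟩, _⟩
      rw [Set.mem_preimage, hσ_inv y hyU]
      exact hyt
  have hVcomp : IsCompact V := by
    rw [hVimg]
    exact hWcomp.image_of_continuousOn hσcont
  exact ⟨V, hVcomp, hVopen, haV, hVO, hU₂inj.mono (fun x hx => hx.1),
    hU₂rinj.mono (fun x hx => hx.1)⟩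


/-- The indicator of a compact open set is locally constant with compact support. -/
lemma indicator_mem_AG (T : Set G) (hTc : IsCompact T)
    (hTo : IsOpen T) : Set.indicator T (1 : G → ℂ) ∈ EtaleGroupoid.AG (G := G) := by
  classical
  have hTcl : IsClosed T := hTc.isClosed
  refine ⟨?_, ?_⟩
  · intro s
    have : Set.indicator T (1 : G → ℂ) ⁻¹' s =
        ((if (1:ℂ) ∈ s then T else ∅) ∪ (if (0:ℂ) ∈ s then Tᶜ else ∅)) := by
      ext x
      by_cases hx : x ∈ T <;>
        simp [Set.indicator, hx] <;> split_ifs <;> simp_all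
    rw [this]
    apply IsOpen.union
    · split_ifs
      · exact hTo
      · exact isOpen_empty
    · split_ifs
      · exact hTcl.isOpen_compl
      · exact isOpen_empty
  · apply HasCompactSupport.intro hTc
    intro x hx
    exact Set.indicator_of_notMem hx _

/-- Disjointification: any member of `Bk k` lies in some `Bk j \ ⋃ i < j, Bk i`. -/
lemma exists_mem_disjointed {α : Type*} (Bk : ℕ → Set α) (x : α) :
    ∀ k, x ∈ Bk k → ∃ j ≤ k, x ∈ Bk j \ ⋃ i ∈ Finset.range j, Bk i := by
  intro k
  induction k using Nat.strong_induction_on with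
  | _ k ih =>
    intro hx
    by_cases hmem : x ∈ ⋃ i ∈ Finset.range k, Bk i
    · simp only [Set.mem_iUnion, Finset.mem_range] at hmem
      obtain ⟨i, hik, hxi⟩ := hmem
      obtain ⟨j, hji, hj⟩ := ih i hik hxi
      exact ⟨j, le_of_lt (lt_of_le_of_lt hji hik), hj⟩
    · exact ⟨k, le_refl k, hx, hmem⟩

end Aux


/-- `A(G)` is dense in `C_c(G)` for the I-norm (hence also for the uniform norm). -/
theorem AG_dense_Inorm {G : Type*} [TopologicalSpace G] [T2Space G]
    [LocallyCompactSpace G] (g : EtaleGroupoid G) (hs : g.SourceEtale)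
    (hu : g.UnitBasis) :
    ∀ f : G → ℂ, Continuous f → HasCompactSupport f → ∀ ε : ℝ, 0 < ε →
      ∃ h : G → ℂ, IsLocallyConstant h ∧ HasCompactSupport h ∧
        g.Inorm (f - h) ≤ ε ∧ ∀ x : G, ‖f x - h x‖ ≤ ε := by
  classical
  intro f hf hfc ε hε
  -- Stage 1: cover the support by compact open sets on which r,s are injective.
  choose Va hVacomp hVaopen hVamem hVasub hVas hVar using
    fun a : G => exists_compactOpen_nbhd g hs hu a Set.univ isOpen_univ (Set.mem_univ a)
  obtain ⟨t₀, ht₀⟩ := hfc.elim_finite_subcover Va hVaopen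
    (fun x _ => Set.mem_iUnion.2 ⟨x, hVamem x⟩)
  set n := t₀.card with hn
  set ε' := ε / (n + 1) with hε'def
  have hnpos : (0:ℝ) < (n:ℝ) + 1 := by positivity
  have hε' : 0 < ε' := div_pos hε hnpos
  have hε'ε : ε' ≤ ε := by
    rw [hε'def, div_le_iff₀ hnpos]
    nlinarith [hε.le]
  -- Stage 2: smaller compact open sets on which f is nearly constant.
  have stage2 : ∀ a : G, ∃ B : Set G, IsCompact B ∧ IsOpen B ∧
      (a ∈ tsupport f → a ∈ B ∧ (∃ b ∈ t₀, B ⊆ Va b) ∧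
        ∀ x ∈ B, ‖f x - f a‖ ≤ ε') := by
    intro a
    by_cases ha : a ∈ tsupport f
    · have hmem := ht₀ ha
      simp only [Set.mem_iUnion] at hmem
      obtain ⟨b, hbt, hab⟩ := hmem
      have hO : IsOpen (Va b ∩ f ⁻¹' Metric.ball (f a) ε') :=
        (hVaopen b).inter (Metric.isOpen_ball.preimage hf)
      have haO : a ∈ Va b ∩ f ⁻¹' Metric.ball (f a) ε' :=
        ⟨hab, by simpa [Metric.mem_ball] using hε'⟩
      obtain ⟨B, hBc, hBo, haB, hBsub, _, _⟩ :=
        exists_compactOpen_nbhd g hs hu a _ hO haO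
      refine ⟨B, hBc, hBo, fun _ => ⟨haB, ⟨b, hbt, fun x hx => (hBsub hx).1⟩, ?_⟩⟩
      intro x hx
      have hxb := (hBsub hx).2
      rw [Set.mem_preimage, Metric.mem_ball, Complex.dist_eq] at hxb
      exact hxb.le
    · exact ⟨∅, isCompact_empty, isOpen_empty, fun h => absurd h ha⟩
  choose B hBcomp hBopen hBprop using stage2
  obtain ⟨t₁, ht₁sub, ht₁fin, ht₁cov⟩ := hfc.elim_finite_subcover_image
    (b := tsupport f) (c := B) (fun a _ => hBopen a)
    (fun x hx => Set.mem_biUnion hx (hBprop x hx).1)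
  -- Enumerate the finite cover and disjointify.
  set l : List G := ht₁fin.toFinset.toList with hl
  set m := l.length with hm
  have hlmem : ∀ a ∈ l, a ∈ t₁ := by
    intro a ha
    rw [hl, Finset.mem_toList, Set.Finite.mem_toFinset] at ha
    exact ha
  set Bk : ℕ → Set G := fun k => if h : k < m then B (l.get ⟨k, h⟩) else ∅ with hBk
  set ck : ℕ → ℂ := fun k => if h : k < m then f (l.get ⟨k, h⟩) else 0 with hck
  set Dk : ℕ → Set G := fun k => Bk k \ ⋃ i ∈ Finset.range k, Bk i with hDk
  have hBkcomp : ∀ k, IsCompact (Bk k) := by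
    intro k; simp only [hBk]; split_ifs; exacts [hBcomp _, isCompact_empty]
  have hBkopen : ∀ k, IsOpen (Bk k) := by
    intro k; simp only [hBk]; split_ifs; exacts [hBopen _, isOpen_empty]
  have hDkBk : ∀ k, Dk k ⊆ Bk k := by
    intro k; simp only [hDk]; exact Set.diff_subset
  have hDkopen : ∀ k, IsOpen (Dk k) := by
    intro k
    simp only [hDk]
    exact (hBkopen k).sdiff (Set.Finite.isClosed_biUnion (Finset.range k).finite_toSet
      (fun i _ => (hBkcomp i).isClosed))
  have hDkcomp : ∀ k, IsCompact (Dk k) := by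
    intro k
    have hcl : IsClosed (Dk k) := by
      simp only [hDk]
      exact (hBkcomp k).isClosed.sdiff (isOpen_biUnion (fun i _ => hBkopen i))
    exact (hBkcomp k).of_isClosed_subset hcl (hDkBk k)
  have hDkdisj : ∀ j k, j < k → Disjoint (Dk j) (Dk k) := by
    intro j k hjk
    rw [Set.disjoint_left]
    intro x hxj hxk
    have hxBj : x ∈ Bk j := hDkBk j hxj
    have : x ∉ ⋃ i ∈ Finset.range k, Bk i := hxk.2
    exact this (Set.mem_biUnion (Finset.mem_range.2 hjk) hxBj)
  set C : Set G := ⋃ k ∈ Finset.range m, Dk k with hC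
  have hcovD : tsupport f ⊆ C := by
    intro x hx
    obtain ⟨a, hat, hxa⟩ := Set.mem_iUnion₂.1 (ht₁cov hx)
    have hal : a ∈ l := by
      rw [hl, Finset.mem_toList, Set.Finite.mem_toFinset]
      exact hat
    obtain ⟨⟨k, hk⟩, hka⟩ := List.mem_iff_get.1 hal
    have hxBk : x ∈ Bk k := by
      simp only [hBk]
      rw [dif_pos hk, hka]
      exact hxa
    obtain ⟨j, hjk, hj⟩ := exists_mem_disjointed Bk x k hxBk
    exact Set.mem_biUnion (Finset.mem_range.2 (lt_of_le_of_lt hjk hk)) hj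
  have hCVa : C ⊆ ⋃ b ∈ t₀, Va b := by
    intro x hx
    obtain ⟨k, hk, hxk⟩ := Set.mem_iUnion₂.1 hx
    rw [Finset.mem_range] at hk
    have hxBk : x ∈ Bk k := hDkBk k hxk
    rw [hBk] at hxBk
    simp only [dif_pos hk] at hxBk
    set a := l.get ⟨k, hk⟩ with ha
    have hat : a ∈ tsupport f := ht₁sub (hlmem a (List.get_mem l _))
    obtain ⟨b, hbt, hsub⟩ := (hBprop a hat).2.1
    exact Set.mem_biUnion hbt (hsub hxBk)
  -- The approximating function.
  set h' : G → ℂ := fun x => ∑ k ∈ Finset.range m, ck k * Set.indicator (Dk k) (1 : G → ℂ) x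
    with hh'
  have hval : ∀ k, k < m → ∀ x ∈ Dk k, h' x = ck k := by
    intro k hk x hx
    show (∑ j ∈ Finset.range m, ck j * Set.indicator (Dk j) (1 : G → ℂ) x) = ck k
    rw [Finset.sum_eq_single_of_mem k (Finset.mem_range.2 hk)]
    · rw [Set.indicator_of_mem hx, Pi.one_apply, mul_one]
    · intro j _ hjk
      have hxj : x ∉ Dk j := by
        rcases lt_or_gt_of_ne hjk with h1 | h1
        · exact fun hxj => Set.disjoint_left.1 (hDkdisj j k h1) hxj hx
        · exact fun hxj => Set.disjoint_left.1 (hDkdisj k j h1) hx hxj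
      rw [Set.indicator_of_notMem hxj, mul_zero]
  have hzero : ∀ x, x ∉ C → h' x = 0 := by
    intro x hx
    rw [hh']
    apply Finset.sum_eq_zero
    intro k hk
    have hxk : x ∉ Dk k := fun hxk => hx (Set.mem_biUnion hk hxk)
    rw [Set.indicator_of_notMem hxk, mul_zero]
  have hpt : ∀ x, ‖f x - h' x‖ ≤ ε' := by
    intro x
    by_cases hx : x ∈ C
    · obtain ⟨k, hk, hxk⟩ := Set.mem_iUnion₂.1 hx
      rw [Finset.mem_range] at hk
      rw [hval k hk x hxk]
      have hxBk : x ∈ Bk k := hDkBk k hxk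
      rw [hBk] at hxBk
      simp only [dif_pos hk] at hxBk
      rw [hck]
      simp only [dif_pos hk]
      set a := l.get ⟨k, hk⟩ with ha
      have hat : a ∈ tsupport f := ht₁sub (hlmem a (List.get_mem l _))
      exact (hBprop a hat).2.2 x hxBk
    · have h1 : h' x = 0 := hzero x hx
      have h2 : f x = 0 := image_eq_zero_of_notMem_tsupport (fun hh => hx (hcovD hh))
      simpa [h1, h2] using hε'.le
  -- h' is locally constant with compact support.
  have hAG : h' ∈ EtaleGroupoid.AG (G := G) := by
    have heq : h' = ∑ k ∈ Finset.range m, ck k • Set.indicator (Dk k) (1 : G → ℂ) := by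
      funext x
      rw [hh']
      simp [Finset.sum_apply, smul_eq_mul]
    rw [heq]
    exact Submodule.sum_mem _ (fun k _ => Submodule.smul_mem _ _
      (indicator_mem_AG _ (hDkcomp k) (hDkopen k)))
  obtain ⟨hLC, hCS⟩ : IsLocallyConstant h' ∧ HasCompactSupport h' := hAG
  -- The fiberwise sum bound.
  have key : ∀ P : G → G, (∀ b : G, Set.InjOn P (Va b)) → ∀ u : G,
      (∑ᶠ α ∈ {α : G | P α = u}, ‖(f - h') α‖) ≤ ε := by
    intro P hP u
    set φ : G → ℝ := fun α => ‖(f - h') α‖ with hφ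
    have hφnonneg : ∀ α, 0 ≤ φ α := fun α => norm_nonneg _
    have hφsupp : ∀ α, φ α ≠ 0 → α ∈ C := by
      intro α hα
      by_contra hαC
      apply hα
      have h2 : f α = 0 := image_eq_zero_of_notMem_tsupport (fun hh => hαC (hcovD hh))
      simp [hφ, Pi.sub_apply, hzero α hαC, h2]
    have hφle : ∀ α, α ∈ Function.support φ → φ α ≤ ε' := by
      intro α _
      simpa [hφ, Pi.sub_apply] using hpt α
    have hsub : {α : G | P α = u} ∩ Function.support φ ⊆
        ⋃ b ∈ t₀, ({α : G | P α = u} ∩ Va b) := by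
      rintro α ⟨hαu, hαs⟩
      obtain ⟨b, hbt, hαb⟩ := Set.mem_iUnion₂.1 (hCVa (hφsupp α hαs))
      exact Set.mem_biUnion hbt ⟨hαu, hαb⟩
    have hfin : ({α : G | P α = u} ∩ Function.support φ).Finite := by
      refine Set.Finite.subset (Set.Finite.biUnion t₀.finite_toSet (fun b _ => ?_)) hsub
      apply Set.Subsingleton.finite
      intro x hx y hy
      exact hP b hx.2 hy.2 (hx.1.trans hy.1.symm)
    rw [finsum_mem_eq_sum _ hfin]
    set T := hfin.toFinset with hT
    have hTsub : ∀ x ∈ T, P x = u ∧ x ∈ Function.support φ := by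
      intro x hx
      rw [hT, Set.Finite.mem_toFinset] at hx
      exact ⟨hx.1, hx.2⟩
    have hbex : ∀ x : G, ∃ b : G, x ∈ T → b ∈ t₀ ∧ x ∈ Va b := by
      intro x
      by_cases hx : x ∈ T
      · have hx' := hTsub x hx
        obtain ⟨b, hbt, _, hαb⟩ := Set.mem_iUnion₂.1
          (hsub ⟨hx'.1, hx'.2⟩)
        exact ⟨b, fun _ => ⟨hbt, hαb⟩⟩
      · exact ⟨x, fun h => absurd h hx⟩
    choose bf hbf using hbex
    have hcard : T.card ≤ n := by
      rw [hn]
      apply Finset.card_le_card_of_injOn bf (fun x hx => (hbf x hx).1)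
      intro x hx y hy hxy
      rw [Finset.mem_coe] at hx hy
      have hxV := (hbf x hx).2
      have hyV := (hbf y hy).2
      rw [hxy] at hxV
      exact hP (bf y) hxV hyV (((hTsub x hx).1).trans ((hTsub y hy).1).symm)
    have hsum : ∑ x ∈ T, φ x ≤ T.card • ε' :=
      Finset.sum_le_card_nsmul T φ ε' (fun x hx => hφle x (hTsub x hx).2)
    calc ∑ x ∈ T, φ x ≤ T.card • ε' := hsum
      _ = (T.card : ℝ) * ε' := nsmul_eq_mul _ _
      _ ≤ (n : ℝ) * ε' := by
          exact mul_le_mul_of_nonneg_right (Nat.cast_le.2 hcard) hε'.le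
      _ ≤ ((n : ℝ) + 1) * ε' := by nlinarith [hε'.le]
      _ = ε := by rw [hε'def, mul_comm, div_mul_cancel₀ ε (ne_of_gt hnpos)]
  refine ⟨h', hLC, hCS, ?_, fun x => (hpt x).trans hε'ε⟩
  rw [EtaleGroupoid.Inorm]
  apply max_le
  · exact Real.iSup_le (fun u => Real.iSup_le (fun _ => key g.r hVar u) hε.le) hε.le
  · exact Real.iSup_le (fun u => Real.iSup_le (fun _ => key g.s hVas u) hε.le) hε.le
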